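/- Let n be a positive integer, ω an n×n real matrix, and ξ ∈ ℝⁿ. Let 𝔤 = fromBlocks [[0, 0], [ξ, ω]] be the (n+1)×(n+1) real block matrix with top-left block 0, top-right block 0, bottom-left block ξ, bottom-right block ω. Then the matrix exponential satisfies exp(𝔤) = fromBlocks [[1, 0], [v(ω) ξ, exp(ω)]], where v(ω) := ∑_{k=0}^∞ ω^k / (k+1)!. -/

import Mathlib

open scoped Nat

/-- `v(ω) := ∑_{k=0}^∞ ω^k / (k+1)!`. -/
noncomputable def vMat (n : ℕ) (ω : Matrix (Fin n) (Fin n) ℝ) : Matrix (Fin n) (Fin n) ℝ :=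
  ∑' k : ℕ, (((k + 1)! : ℝ)⁻¹) • ω ^ k

open Matrix NormedSpace in
/-- For the block matrix `𝔤 = fromBlocks [[0,0],[ξ,ω]]`,
`exp 𝔤 = fromBlocks [[1,0],[v(ω) ξ, exp ω]]`. -/
theorem exp_se_block (n : ℕ) (hn : 0 < n) (ω : Matrix (Fin n) (Fin n) ℝ) (ξ : Fin n → ℝ) :
    NormedSpace.exp
        (Matrix.fromBlocks (0 : Matrix (Fin 1) (Fin 1) ℝ) 0 (Matrix.replicateCol (Fin 1) ξ) ω) =
      Matrix.fromBlocks 1 0 (Matrix.replicateCol (Fin 1) ((vMat n ω).mulVec ξ)) (NormedSpace.exp ω) := by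
  haveI : Nonempty (Fin n) := Fin.pos_iff_nonempty.mp hn
  set g : Matrix (Fin 1 ⊕ Fin n) (Fin 1 ⊕ Fin n) ℝ :=
    fromBlocks (0 : Matrix (Fin 1) (Fin 1) ℝ) 0 (replicateCol (Fin 1) ξ) ω with hgdef
  -- powers of g
  have hpow : ∀ k : ℕ,
      g ^ (k + 1) = fromBlocks 0 0 (replicateCol (Fin 1) ((ω ^ k) *ᵥ ξ)) (ω ^ (k + 1)) := by
    intro k
    induction k with
    | zero => simp [hgdef]
    | succ k ih =>
      rw [pow_succ, ih, hgdef, fromBlocks_multiply]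
      simp [← pow_succ, ← replicateCol_mulVec, mulVec_mulVec]
  -- norm instances
  letI : SeminormedRing (Matrix (Fin n) (Fin n) ℝ) := Matrix.linftyOpSemiNormedRing
  letI : NormedRing (Matrix (Fin n) (Fin n) ℝ) := Matrix.linftyOpNormedRing
  letI : NormedAlgebra ℝ (Matrix (Fin n) (Fin n) ℝ) := Matrix.linftyOpNormedAlgebra
  letI : NormOneClass (Matrix (Fin n) (Fin n) ℝ) := Matrix.linfty_opNormOneClass
  letI : SeminormedRing (Matrix (Fin 1 ⊕ Fin n) (Fin 1 ⊕ Fin n) ℝ) :=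
    Matrix.linftyOpSemiNormedRing
  letI : NormedRing (Matrix (Fin 1 ⊕ Fin n) (Fin 1 ⊕ Fin n) ℝ) := Matrix.linftyOpNormedRing
  letI : NormedAlgebra ℝ (Matrix (Fin 1 ⊕ Fin n) (Fin 1 ⊕ Fin n) ℝ) :=
    Matrix.linftyOpNormedAlgebra
  -- summability of the exponential series of g
  have hgsum : Summable fun k : ℕ => ((k ! : ℝ)⁻¹) • g ^ k := expSeries_summable' (𝕂 := ℝ) g
  -- the exponential series of ω
  have hωsum : HasSum (fun k : ℕ => ((k ! : ℝ)⁻¹) • ω ^ k) (exp ω) := by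
    rw [exp_eq_tsum ℝ]
    exact (expSeries_summable' (𝕂 := ℝ) ω).hasSum
  -- shifted series sums to `exp ω - 1`
  have h2 : HasSum (fun k : ℕ => (((k + 1)! : ℝ)⁻¹) • ω ^ (k + 1)) (exp ω - 1) := by
    have := (hasSum_nat_add_iff' (f := fun k : ℕ => ((k ! : ℝ)⁻¹) • ω ^ k) 1).mpr hωsum
    simpa using this
  -- the series defining vMat
  have h1 : HasSum (fun k : ℕ => (((k + 1)! : ℝ)⁻¹) • ω ^ k) (vMat n ω) := by
    have hs : Summable fun k : ℕ => (((k + 1)! : ℝ)⁻¹) • ω ^ k := by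
      apply Summable.of_norm
      refine Summable.of_nonneg_of_le (fun k => norm_nonneg _) (fun k => ?_)
        (Real.summable_pow_div_factorial ‖ω‖)
      rw [norm_smul]
      calc ‖((((k : ℕ) + 1)! : ℝ)⁻¹)‖ * ‖ω ^ k‖
          ≤ ((k ! : ℝ)⁻¹) * ‖ω‖ ^ k := by
            apply mul_le_mul _ (norm_pow_le _ _) (norm_nonneg _)
              (by positivity)
            rw [Real.norm_eq_abs, abs_of_nonneg (by positivity)]
            apply inv_anti₀ (by positivity)
            exact_mod_cast Nat.factorial_le (Nat.le_succ k)
        _ = ‖ω‖ ^ k / (k ! : ℝ) := by ring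
    have : vMat n ω = ∑' k : ℕ, (((k + 1)! : ℝ)⁻¹) • ω ^ k := rfl
    rw [this]
    exact hs.hasSum
  -- continuous additive maps into the big matrix space
  have hF : Continuous fun M : Matrix (Fin n) (Fin n) ℝ =>
      (fromBlocks 0 0 (replicateCol (Fin 1) (M *ᵥ ξ)) 0 :
        Matrix (Fin 1 ⊕ Fin n) (Fin 1 ⊕ Fin n) ℝ) :=
    Continuous.matrix_fromBlocks continuous_const continuous_const
      ((continuous_id.matrix_mulVec continuous_const).matrix_replicateCol) continuous_const
  have hG : Continuous fun M : Matrix (Fin n) (Fin n) ℝ =>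
      (fromBlocks 0 0 0 M : Matrix (Fin 1 ⊕ Fin n) (Fin 1 ⊕ Fin n) ℝ) :=
    Continuous.matrix_fromBlocks continuous_const continuous_const continuous_const
      continuous_id
  let F : Matrix (Fin n) (Fin n) ℝ →+ Matrix (Fin 1 ⊕ Fin n) (Fin 1 ⊕ Fin n) ℝ :=
    AddMonoidHom.mk' (fun M => fromBlocks 0 0 (replicateCol (Fin 1) (M *ᵥ ξ)) 0)
      (by
        intro M N
        ext (i | i) (j | j) <;> simp [add_mulVec])
  let G : Matrix (Fin n) (Fin n) ℝ →+ Matrix (Fin 1 ⊕ Fin n) (Fin 1 ⊕ Fin n) ℝ :=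
    AddMonoidHom.mk' (fun M => fromBlocks 0 0 0 M)
      (by
        intro M N
        ext (i | i) (j | j) <;> simp)
  have hA := h1.map F hF
  have hB := h2.map G hG
  have h3 : HasSum (fun k : ℕ => (((k + 1)! : ℝ)⁻¹) • g ^ (k + 1))
      (fromBlocks 0 0 (replicateCol (Fin 1) ((vMat n ω) *ᵥ ξ)) (exp ω - 1)) := by
    have h := hA.add hB
    have hterm : ∀ k : ℕ,
        (F ∘ fun k : ℕ => (((k + 1)! : ℝ)⁻¹) • ω ^ k) k +
          (G ∘ fun k : ℕ => (((k + 1)! : ℝ)⁻¹) • ω ^ (k + 1)) k =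
        (((k + 1)! : ℝ)⁻¹) • g ^ (k + 1) := by
      intro k
      rw [hpow k]
      show fromBlocks 0 0 (replicateCol (Fin 1) (((((k + 1)! : ℝ)⁻¹) • ω ^ k) *ᵥ ξ)) 0 +
          fromBlocks 0 0 0 ((((k + 1)! : ℝ)⁻¹) • ω ^ (k + 1)) = _
      rw [fromBlocks_add, fromBlocks_smul]
      simp [smul_mulVec, replicateCol_smul]
    have hsum : F (vMat n ω) + G (exp ω - 1) =
        fromBlocks 0 0 (replicateCol (Fin 1) ((vMat n ω) *ᵥ ξ)) (exp ω - 1) := by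
      show fromBlocks 0 0 (replicateCol (Fin 1) ((vMat n ω) *ᵥ ξ)) 0 +
          fromBlocks 0 0 0 (exp ω - 1) = _
      rw [fromBlocks_add]
      simp
    rw [← hsum]
    exact h.congr_fun fun k => (hterm k).symm
  -- assemble
  have hexp : exp g = ∑' k : ℕ, ((k ! : ℝ)⁻¹) • g ^ k := by rw [exp_eq_tsum ℝ]
  rw [hexp, hgsum.tsum_eq_zero_add, h3.tsum_eq]
  rw [show ((0! : ℝ)⁻¹) • g ^ 0 = fromBlocks 1 0 0 1 by simp [fromBlocks_one]]
  rw [fromBlocks_add]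
  simp
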